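/- arXiv:math/0401413 — 2 statements merged into one kernel-verified Lean document; each statement's English description precedes it below -/
import Mathlib

section
/- Let α be a complex number with |α| = 1 such that multiplication by α preserves a lattice in ℂ (a rank-2 discrete subgroup spanning ℂ over ℝ). If α ≠ ±1, then α is a primitive k-th root of unity with k ∈ {3, 4, 6}. -/
private lemma prim_three {α : ℂ} (h : α ^ 2 + α + 1 = 0) : IsPrimitiveRoot α 3 := by
  have h3 : α ^ 3 = 1 := by linear_combination (α - 1) * h
  constructor
  · exact h3
  · intro l hl
    have hmod : α ^ (l % 3) = 1 := by
      conv at hl => rw [← Nat.div_add_mod l 3, pow_add, pow_mul, h3, one_pow, one_mul]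
      exact hl
    have hcases : l % 3 = 0 ∨ l % 3 = 1 ∨ l % 3 = 2 := by omega
    rcases hcases with hr | hr | hr
    · exact Nat.dvd_of_mod_eq_zero hr
    · rw [hr, pow_one] at hmod
      rw [hmod] at h; norm_num at h
    · rw [hr] at hmod
      have hα : α = -2 := by linear_combination h - hmod
      rw [hα] at h; norm_num at h

private lemma prim_four {α : ℂ} (h : α ^ 2 + 1 = 0) : IsPrimitiveRoot α 4 := by
  have h4 : α ^ 4 = 1 := by linear_combination (α ^ 2 - 1) * h
  constructor
  · exact h4
  · intro l hl
    have hmod : α ^ (l % 4) = 1 := by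
      conv at hl => rw [← Nat.div_add_mod l 4, pow_add, pow_mul, h4, one_pow, one_mul]
      exact hl
    have hcases : l % 4 = 0 ∨ l % 4 = 1 ∨ l % 4 = 2 ∨ l % 4 = 3 := by omega
    rcases hcases with hr | hr | hr | hr
    · exact Nat.dvd_of_mod_eq_zero hr
    · rw [hr, pow_one] at hmod
      rw [hmod] at h; norm_num at h
    · rw [hr] at hmod
      have : (2 : ℂ) = 0 := by linear_combination h - hmod
      norm_num at this
    · rw [hr] at hmod
      have hα : α = -1 := by linear_combination α * h - hmod
      rw [hα] at h; norm_num at h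

private lemma prim_six {α : ℂ} (h : α ^ 2 - α + 1 = 0) : IsPrimitiveRoot α 6 := by
  have hm1 : α ^ 3 + 1 = 0 := by linear_combination (α + 1) * h
  have h6 : α ^ 6 = 1 := by linear_combination (α ^ 3 - 1) * hm1
  constructor
  · exact h6
  · intro l hl
    have hmod : α ^ (l % 6) = 1 := by
      conv at hl => rw [← Nat.div_add_mod l 6, pow_add, pow_mul, h6, one_pow, one_mul]
      exact hl
    have hcases : l % 6 = 0 ∨ l % 6 = 1 ∨ l % 6 = 2 ∨ l % 6 = 3 ∨ l % 6 = 4 ∨ l % 6 = 5 := by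
      omega
    rcases hcases with hr | hr | hr | hr | hr | hr
    · exact Nat.dvd_of_mod_eq_zero hr
    · rw [hr, pow_one] at hmod
      rw [hmod] at h; norm_num at h
    · rw [hr] at hmod
      have hα : α = 2 := by linear_combination hmod - h
      rw [hα] at h; norm_num at h
    · rw [hr] at hmod
      have : (2 : ℂ) = 0 := by linear_combination hm1 - hmod
      norm_num at this
    · rw [hr] at hmod
      have hα : α = -1 := by linear_combination α * hm1 - hmod
      rw [hα] at h; norm_num at h
    · rw [hr] at hmod
      have hq : α ^ 2 + 1 = 0 := by linear_combination α ^ 2 * hm1 - hmod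
      have hα : α = 0 := by linear_combination hq - h
      rw [hα] at h; norm_num at h

/-- If `α ∈ ℂ` with `|α| = 1` preserves a lattice `ℤv₁ + ℤv₂` (with `v₁, v₂`
linearly independent over `ℝ`) under multiplication, and `α ≠ ±1`, then `α` is
a primitive `k`-th root of unity with `k ∈ {3, 4, 6}`. -/
theorem stmt_10 (α : ℂ) (habs : ‖α‖ = 1) (v₁ v₂ : ℂ)
    (hind : LinearIndependent ℝ ![v₁, v₂])
    (hpres : ∀ z ∈ Submodule.span ℤ ({v₁, v₂} : Set ℂ),
      α * z ∈ Submodule.span ℤ ({v₁, v₂} : Set ℂ))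
    (h1 : α ≠ 1) (h2 : α ≠ -1) :
    ∃ k ∈ ({3, 4, 6} : Set ℕ), IsPrimitiveRoot α k := by
  -- v₁ ≠ 0
  have hv₁ne : v₁ ≠ 0 := by
    have := hind.ne_zero 0
    simpa using this
  -- the matrix of multiplication by α
  have hv1 : α * v₁ ∈ Submodule.span ℤ ({v₁, v₂} : Set ℂ) :=
    hpres v₁ (Submodule.subset_span (by simp))
  have hv2 : α * v₂ ∈ Submodule.span ℤ ({v₁, v₂} : Set ℂ) :=
    hpres v₂ (Submodule.subset_span (by simp))
  obtain ⟨a, b, hab⟩ := Submodule.mem_span_pair.mp hv1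
  obtain ⟨c, d, hcd⟩ := Submodule.mem_span_pair.mp hv2
  simp only [zsmul_eq_mul] at hab hcd
  -- α satisfies a monic integer quadratic
  obtain ⟨t, n, hquad⟩ : ∃ t n : ℤ, α ^ 2 - (t : ℂ) * α + (n : ℂ) = 0 := by
    refine ⟨a + d, a * d - b * c, ?_⟩
    have key : (α ^ 2 - ((a : ℂ) + d) * α + ((a : ℂ) * d - b * c)) * v₁ = 0 := by
      linear_combination ((d : ℂ) - α) * hab - (b : ℂ) * hcd
    have := mul_eq_zero.mp key
    rcases this with h | h
    · push_cast
      linear_combination h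
    · exact absurd h hv₁ne
  -- real and imaginary parts
  have hsum : α.re ^ 2 + α.im ^ 2 = 1 := by
    have := Complex.sq_norm α
    rw [habs] at this
    simpa [Complex.normSq_apply, pow_two] using this.symm
  have hy : α.im ≠ 0 := by
    intro hy0
    have hre2 : α.re ^ 2 = 1 := by nlinarith
    have hfac : (α.re - 1) * (α.re + 1) = 0 := by linear_combination hre2
    rcases mul_eq_zero.mp hfac with hx | hx
    · have hx' : α.re = 1 := by linarith
      exact h1 (by apply Complex.ext <;> simp [hx', hy0])
    · have hx' : α.re = -1 := by linarith
      exact h2 (by apply Complex.ext <;> simp [hx', hy0])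
  have him := congrArg Complex.im hquad
  have hre := congrArg Complex.re hquad
  simp [pow_two, Complex.mul_im, Complex.mul_re] at him hre
  -- t = 2 re α
  have hfact : ((t : ℝ) - 2 * α.re) * α.im = 0 := by linear_combination -him
  have ht : (t : ℝ) = 2 * α.re := by
    rcases mul_eq_zero.mp hfact with h | h
    · linarith [sub_eq_zero.mp h]
    · exact absurd h hy
  -- n = 1
  have hnR : (n : ℝ) = 1 := by linear_combination hre + α.re * ht + hsum
  have hn : n = 1 := by exact_mod_cast hnR
  -- |t| < 2
  have hy2 : 0 < α.im ^ 2 := lt_of_le_of_ne (sq_nonneg _) (Ne.symm (pow_ne_zero 2 hy))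
  have hx2 : α.re ^ 2 < 1 := by nlinarith
  have htb : -2 < (t : ℝ) ∧ (t : ℝ) < 2 := by constructor <;> nlinarith
  have htb' : -2 < t ∧ t < 2 := ⟨by exact_mod_cast htb.1, by exact_mod_cast htb.2⟩
  subst hn
  obtain ⟨htl, htr⟩ := htb'
  interval_cases t
  · -- t = -1 : α² + α + 1 = 0, primitive 3rd root
    exact ⟨3, by simp, prim_three (by push_cast at hquad; linear_combination hquad)⟩
  · -- t = 0 : α² + 1 = 0, primitive 4th root
    exact ⟨4, by simp, prim_four (by push_cast at hquad; linear_combination hquad)⟩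
  · -- t = 1 : α² - α + 1 = 0, primitive 6th root
    exact ⟨6, by simp, prim_six (by push_cast at hquad; linear_combination hquad)⟩
end

section
/- Let 𝔤 be the 4-dimensional real Lie algebra with basis X₁, X₂, X₃, X₄ and nonzero brackets [X₄,X₁] = -X₂, [X₄,X₂] = X₁. Let J be the linear map with JX₁ = X₂, JX₂ = -X₁, JX₃ = X₄, JX₄ = -X₃. Then J² = -id and the Nijenhuis tensor N(X,Y) = [JX,JY] - J[JX,Y] - J[X,JY] - [X,Y] vanishes for all X, Y ∈ 𝔤. -/
/-- The bracket of the 4-dimensional solvable Lie algebra with basis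
`X₁, X₂, X₃, X₄` (coordinates `0,1,2,3`) and nonzero brackets
`[X₄,X₁] = -X₂`, `[X₄,X₂] = X₁` (all other basis brackets vanish),
extended bilinearly. -/
def br15 (x y : Fin 4 → ℝ) : Fin 4 → ℝ :=
  ![x 3 * y 1 - x 1 * y 3, -(x 3 * y 0 - x 0 * y 3), 0, 0]

/-- The almost complex structure with `JX₁ = X₂`, `JX₂ = -X₁`, `JX₃ = X₄`,
`JX₄ = -X₃`, extended linearly. -/
def J15 (x : Fin 4 → ℝ) : Fin 4 → ℝ := ![-(x 1), x 0, -(x 3), x 2]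

/-- On the solvable Lie algebra of hyperelliptic surfaces (`[X₄,X₁] = -X₂`,
`[X₄,X₂] = X₁`, all other brackets zero), the map `J` with `JX₁ = X₂`,
`JX₂ = -X₁`, `JX₃ = X₄`, `JX₄ = -X₃` satisfies `J² = -id` and its Nijenhuis
tensor `N(X,Y) = [JX,JY] - J[JX,Y] - J[X,JY] - [X,Y]` vanishes. -/
theorem stmt_15 :
    (∀ x : Fin 4 → ℝ, J15 (J15 x) = -x) ∧
    (∀ x y : Fin 4 → ℝ,
      br15 (J15 x) (J15 y) - J15 (br15 (J15 x) y) - J15 (br15 x (J15 y)) - br15 x y = 0) := by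
  constructor
  · intro x
    funext i
    fin_cases i <;> simp [J15]
  · intro x y
    funext i
    fin_cases i <;> simp [J15, br15] <;> ring
end
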